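/- Let k be an algebraically closed field with char k ≠ 2 and n ≥ 1 a natural number. Let d₀, d₁, d₂ be natural numbers with d₁ ≤ n·d₀, n·d₂ ≤ (n²−1)·d₁, n·d₂ < d₁, and d₀ + d₂ ≤ n·d₁. For a stratum datum (A,C) of type (d₀,d₁,d₂) and any B : Fin n → Matrix (Fin d₂) (Fin d₀) k, let M i be the square matrix of size d₂+d₁+d₀ with block form [[0, A i, B i],[0, 0, C i],[0, 0, 0]] along the block decomposition d₂, d₁, d₀. Then the minimum, over all such triples (A, B, C), of Module.finrank k (⨅_i LinearMap.ker (Matrix.mulVecLin (M i))) equals d₂ + (d₁ − n·d₂). -/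

import Mathlib

/-- A stratum datum of type `(d₀, d₁, d₂)` over `k`: families
`A : Fin n → Matrix (Fin d₂) (Fin d₁) k`, `C : Fin n → Matrix (Fin d₁) (Fin d₀) k`
with `∑ᵢ Aᵢ Cᵢ = 0`, the images of the `Cᵢ` spanning `k^{d₁}` and the images of
the `Aᵢ` spanning `k^{d₂}`. These correspond to representations of
`𝒜 = k⟨x₁,…,xₙ⟩/((x₁,…,xₙ)³ + (∑ xᵢ²))` with radical layering `(d₀,d₁,d₂)`. -/
def IsStratumDatum (k : Type*) [Field k] {n d₀ d₁ d₂ : ℕ}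
    (A : Fin n → Matrix (Fin d₂) (Fin d₁) k)
    (C : Fin n → Matrix (Fin d₁) (Fin d₀) k) : Prop :=
  (∑ i, A i * C i) = 0 ∧
  (⨆ i, LinearMap.range (Matrix.mulVecLin (C i))) = ⊤ ∧
  (⨆ i, LinearMap.range (Matrix.mulVecLin (A i))) = ⊤

/-- The square matrix of size `d₂ + d₁ + d₀` (indexed by
`Fin d₂ ⊕ Fin d₁ ⊕ Fin d₀`) with block form
`[[0, A i, B i], [0, 0, C i], [0, 0, 0]]`. -/
def blockM {k : Type*} [Field k] {n d₀ d₁ d₂ : ℕ}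
    (A : Fin n → Matrix (Fin d₂) (Fin d₁) k)
    (B : Fin n → Matrix (Fin d₂) (Fin d₀) k)
    (C : Fin n → Matrix (Fin d₁) (Fin d₀) k) (i : Fin n) :
    Matrix (Fin d₂ ⊕ (Fin d₁ ⊕ Fin d₀)) (Fin d₂ ⊕ (Fin d₁ ⊕ Fin d₀)) k :=
  Matrix.fromBlocks 0 (Matrix.fromCols (A i) (B i))
    0 (Matrix.fromBlocks 0 (C i) 0 0)


/-- The `m`-th member of our family of `n × n` trace-zero integer matrices:
`m = 0` is the cyclic permutation matrix; `1 ≤ m < n^2 - n` enumerates the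
off-diagonal elementary matrices except the one at position `(n-1, n-2)`;
`n^2 - n ≤ m < n^2 - 1` enumerates consecutive diagonal differences. -/
def fmat (n m i j : ℕ) : ℤ :=
  if m = 0 then (if j + 1 = i ∨ (j + 1 = n ∧ i = 0) then 1 else 0)
  else if m < n^2 - n then
    (if i = (m-1) / (n-1) ∧
        j = (m-1) % (n-1) + (if (m-1)/(n-1) ≤ (m-1) % (n-1) then 1 else 0) then 1 else 0)
  else
    (if i = m - (n^2-n) ∧ j = m - (n^2-n) then 1
     else if i = m - (n^2-n) + 1 ∧ j = m - (n^2-n) + 1 then -1 else 0)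

lemma fmat_trace {n : ℕ} (hn : 2 ≤ n) {m : ℕ} (hm : m < n^2 - 1) :
    ∑ i ∈ Finset.range n, fmat n m i i = 0 := by
  obtain ⟨q, rfl⟩ : ∃ q, n = q + 2 := ⟨n - 2, by omega⟩
  set n := q + 2 with hnq
  have e3 : n^2 - n = (q+1)*(q+1) + (q+1) := by
    have : n^2 = q*q + 4*q + 4 := by rw [hnq]; ring
    have : (q+1)*(q+1) = q*q + 2*q + 1 := by ring
    omega
  have e4 : n^2 - 1 = (q+1)*(q+1) + 2*(q+1) := by
    have : n^2 = q*q + 4*q + 4 := by rw [hnq]; ring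
    have : (q+1)*(q+1) = q*q + 2*q + 1 := by ring
    omega
  rcases Nat.eq_zero_or_pos m with rfl | hm0
  · apply Finset.sum_eq_zero
    intro i hi
    unfold fmat
    rw [if_pos rfl, if_neg (by omega)]
  by_cases hmd : m < n^2 - n
  · -- off-diagonal: all diagonal entries vanish
    apply Finset.sum_eq_zero
    intro i hi
    simp only [fmat, if_neg (by omega : ¬ m = 0), if_pos hmd]
    rw [if_neg]
    rintro ⟨hD, hY⟩
    split at hY <;> omega
  · -- diagonal difference
    set i₀ := m - (n^2 - n) with hi₀
    have hi₀lt : i₀ + 1 < n := by omega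
    have hpt : ∀ i ∈ Finset.range n, fmat n m i i =
        (if i = i₀ then (1:ℤ) else 0) + (if i = i₀ + 1 then (-1:ℤ) else 0) := by
      intro i hi
      simp only [fmat, if_neg (by omega : ¬ m = 0), if_neg hmd]
      rcases eq_or_ne i i₀ with rfl | h1
      · rw [if_pos ⟨rfl, rfl⟩, if_pos rfl, if_neg (by omega)]; ring
      rcases eq_or_ne i (i₀+1) with rfl | h2
      · rw [if_neg (by omega), if_pos ⟨rfl, rfl⟩, if_neg (by omega), if_pos rfl]; ring
      · rw [if_neg (by omega), if_neg (by omega), if_neg h1, if_neg h2]; ring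
    rw [Finset.sum_congr rfl hpt, Finset.sum_add_distrib,
      Finset.sum_ite_eq' _ i₀, Finset.sum_ite_eq' _ (i₀+1)]
    simp only [Finset.mem_range]
    rw [if_pos (by omega), if_pos (by omega)]
    ring

lemma fmat_elim {k : Type*} [Field k] {n : ℕ} (hn : 2 ≤ n) (U : ℕ → k)
    (hU : ∀ i j, i < n → j < n →
      ∑ m ∈ Finset.range (n^2-1), (fmat n m i j : k) * U m = 0) :
    ∀ m, m < n^2 - 1 → U m = 0 := by
  have e3 : n^2 - n = (n-1)*(n-1) + (n-1) := by
    obtain ⟨q, rfl⟩ : ∃ q, n = q + 2 := ⟨n - 2, by omega⟩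
    have : (q+2)^2 = q*q + 4*q + 4 := by ring
    have : (q+2-1)*(q+2-1) = q*q + 2*q + 1 := by
      have : q+2-1 = q+1 := by omega
      rw [this]; ring
    omega
  have e4 : n^2 - 1 = (n-1)*(n-1) + 2*(n-1) := by
    obtain ⟨q, rfl⟩ : ∃ q, n = q + 2 := ⟨n - 2, by omega⟩
    have : (q+2)^2 = q*q + 4*q + 4 := by ring
    have : (q+2-1)*(q+2-1) = q*q + 2*q + 1 := by
      have : q+2-1 = q+1 := by omega
      rw [this]; ring
    omega
  intro m
  induction m using Nat.strong_induction_on with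
  | _ m IH =>
  intro hm
  rcases Nat.eq_zero_or_pos m with rfl | hm0
  · -- m = 0, use equation at slot (n-1, n-2)
    have key := hU (n-1) (n-2) (by omega) (by omega)
    rw [Finset.sum_eq_single 0] at key
    · have h1 : fmat n 0 (n-1) (n-2) = 1 := by
        unfold fmat; rw [if_pos rfl, if_pos (by omega)]
      rw [h1] at key
      simpa using key
    · intro b hb hb0
      have hf : fmat n b (n-1) (n-2) = 0 := by
        unfold fmat
        rw [if_neg hb0]
        by_cases hbd : b < n^2 - n
        · rw [if_pos hbd, if_neg]
          rintro ⟨hD, hY⟩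
          have hdm := Nat.div_add_mod (b-1) (n-1)
          have hmod : (b-1) % (n-1) < n - 1 := Nat.mod_lt _ (by omega)
          rw [← hD] at hdm
          split at hY <;> omega
        · rw [if_neg hbd, if_neg (by omega), if_neg (by omega)]
      rw [hf]; ring
    · intro h; exact absurd (Finset.mem_range.mpr (by omega)) h
  by_cases hmd : m < n^2 - n
  · -- off-diagonal case
    set D := (m-1) / (n-1) with hD
    set Y := (m-1) % (n-1) with hY
    have hdm : (n-1) * D + Y = m - 1 := Nat.div_add_mod (m-1) (n-1)
    have hYlt : Y < n - 1 := Nat.mod_lt _ (by omega)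
    have hDlt : D < n := by
      have : m - 1 < (n-1) * n := by
        have : (n-1) * n = (n-1)*(n-1) + (n-1) := by
          obtain ⟨q, rfl⟩ : ∃ q, n = q + 2 := ⟨n - 2, by omega⟩
          simp only [show q+2-1 = q+1 from by omega]
          ring
        omega
      rw [hD]
      exact Nat.div_lt_of_lt_mul (by omega)
    set j := Y + (if D ≤ Y then 1 else 0) with hj
    have hjlt : j < n := by rw [hj]; split <;> omega
    have hjD : j ≠ D := by rw [hj]; split <;> omega
    have key := hU D j hDlt hjlt
    rw [Finset.sum_eq_single m] at key
    · have h1 : fmat n m D j = 1 := by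
        unfold fmat
        rw [if_neg (by omega), if_pos hmd, if_pos ⟨rfl, rfl⟩]
      rw [h1] at key
      simpa using key
    · intro b hb hbm
      rcases Nat.eq_zero_or_pos b with rfl | hb0
      · rw [IH 0 (by omega) (by omega)]; ring
      by_cases hbd : b < n^2 - n
      · have hf : fmat n b D j = 0 := by
          unfold fmat
          rw [if_neg (by omega), if_pos hbd, if_neg]
          rintro ⟨hD', hY'⟩
          have hdm' := Nat.div_add_mod (b-1) (n-1)
          have hmod' : (b-1) % (n-1) < n - 1 := Nat.mod_lt _ (by omega)
          rw [← hD'] at hdm'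
          rw [hj] at hY'
          split at hY' <;> split at hY' <;> omega
        rw [hf]; ring
      · have hf : fmat n b D j = 0 := by
          unfold fmat
          rw [if_neg (by omega), if_neg hbd, if_neg (by omega), if_neg (by omega)]
        rw [hf]; ring
    · intro h; exact absurd (Finset.mem_range.mpr (by omega)) h
  · -- diagonal difference case
    set i₀ := m - (n^2 - n) with hi₀
    have hi₀lt : i₀ < n - 1 := by omega
    have key := hU i₀ i₀ (by omega) (by omega)
    rw [Finset.sum_eq_single m] at key
    · have h1 : fmat n m i₀ i₀ = 1 := by
        unfold fmat
        rw [if_neg (by omega), if_neg hmd, if_pos ⟨rfl, rfl⟩]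
      rw [h1] at key
      simpa using key
    · intro b hb hbm
      rcases Nat.eq_zero_or_pos b with rfl | hb0
      · have hf : fmat n 0 i₀ i₀ = 0 := by
          unfold fmat; rw [if_pos rfl, if_neg (by omega)]
        rw [hf]; ring
      by_cases hbd : b < n^2 - n
      · have hf : fmat n b i₀ i₀ = 0 := by
          unfold fmat
          rw [if_neg (by omega), if_pos hbd, if_neg]
          rintro ⟨hD', hY'⟩
          have hdm' := Nat.div_add_mod (b-1) (n-1)
          have hmod' : (b-1) % (n-1) < n - 1 := Nat.mod_lt _ (by omega)
          rw [← hD'] at hdm'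
          split at hY' <;> omega
        rw [hf]; ring
      · rcases eq_or_ne (b - (n^2-n)) i₀ with he | he
        · -- b = m impossible
          omega
        rcases eq_or_ne (b - (n^2-n) + 1) i₀ with he2 | he2
        · -- b = m - 1 < m : U b = 0
          rw [IH b (by omega) (by omega)]; ring
        · have hf : fmat n b i₀ i₀ = 0 := by
            unfold fmat
            rw [if_neg (by omega), if_neg hbd, if_neg (by omega), if_neg (by omega)]
          rw [hf]; ring
    · intro h; exact absurd (Finset.mem_range.mpr (by omega)) h

/-- Entries of the `i`-th matrix `C i` of the witness family. -/
def Cent (n d₂ b a h i r s : ℕ) : ℤ :=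
  if r < n*d₂ then
    (if s < b ∧ r % d₂ = s % d₂ then fmat n (s / d₂) i (r / d₂) else 0)
  else
    (if b ≤ s then
      (if r - n*d₂ = i * a + (s - b) then 1 else 0) +
      (if s - b = i * h + (r - n*d₂) ∧ 1 ≤ i then 1 else 0)
     else 0)

lemma fmat_zero_col {n : ℕ} (hn : 2 ≤ n) {j : ℕ} (hj : j < n) :
    ∃ i, i < n ∧ ∀ j', j' < n → fmat n 0 i j' = if j' = j then 1 else 0 := by
  refine ⟨if j + 1 = n then 0 else j + 1, by split <;> omega, ?_⟩
  intro j' hj'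
  unfold fmat
  rw [if_pos rfl]
  by_cases hw : j + 1 = n
  · rw [if_pos hw]
    rcases eq_or_ne j' j with rfl | hne
    · rw [if_pos (Or.inr ⟨hw, rfl⟩), if_pos rfl]
    · rw [if_neg (by omega), if_neg hne]
  · rw [if_neg hw]
    rcases eq_or_ne j' j with rfl | hne
    · rw [if_pos (Or.inl rfl), if_pos rfl]
    · rw [if_neg (by omega), if_neg hne]

section Cinj
variable {k : Type*} [Field k]

lemma C_inj {n d₀ d₁ d₂ b a h : ℕ} (hn : 1 ≤ n)
    (hb1 : d₂ ≤ b) (hb2 : b ≤ (n^2-1)*d₂) (hba : b + a = d₀)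
    (hah : a ≤ n*h) (hd2n : d₂ ≠ 0 → 2 ≤ n)
    (hnd2 : n*d₂ + h = d₁)
    (v : Fin d₀ → k)
    (hv : ∀ (i : Fin n) (r : Fin d₁),
      ∑ s : Fin d₀, ((Cent n d₂ b a h (i:ℕ) (r:ℕ) (s:ℕ) : ℤ) : k) * v s = 0) :
    v = 0 := by
  have hbd : b ≤ d₀ := by omega
  -- Part 1: coordinates in [b, d₀) vanish
  have hW : ∀ q, ∀ hq : q < a, v ⟨b + q, by omega⟩ = 0 := by
    intro q hq
    have hh0 : 0 < h := by
      rcases Nat.eq_zero_or_pos h with rfl | hp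
      · omega
      · exact hp
    by_cases hqh : q < h
    · have hr : n*d₂ + q < d₁ := by omega
      have key := hv ⟨0, hn⟩ ⟨n*d₂ + q, hr⟩
      rw [Finset.sum_eq_single (⟨b + q, by omega⟩ : Fin d₀)] at key
      · have hone : Cent n d₂ b a h 0 (n*d₂+q) (b+q) = 1 := by
          unfold Cent
          rw [if_neg (by omega), if_pos (by omega), if_pos (by omega), if_neg (by omega)]
          ring
        rw [hone] at key; simpa using key
      · intro s _ hs
        have hzero : Cent n d₂ b a h 0 (n*d₂+q) (s:ℕ) = 0 := by
          unfold Cent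
          rw [if_neg (by omega)]
          by_cases hsb : b ≤ (s:ℕ)
          · rw [if_pos hsb, if_neg, if_neg (by omega)]
            · ring
            · intro hcon
              exact hs (Fin.ext (show (s:ℕ) = b + q by omega))
          · rw [if_neg hsb]
        rw [hzero]; simp
      · intro hmem; exact absurd (Finset.mem_univ _) hmem
    · -- q ≥ h
      have hah2 : h < a := by omega
      have hi1 : 1 ≤ q / h := (Nat.one_le_div_iff hh0).mpr (by omega)
      have hiq : q / h < n := by
        rw [Nat.div_lt_iff_lt_mul hh0]
        exact lt_of_lt_of_le hq (by rw [Nat.mul_comm] at hah ⊢; exact hah)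
      have hmod : q % h < h := Nat.mod_lt _ hh0
      have hdm : h * (q/h) + q % h = q := Nat.div_add_mod q h
      have hcomm : (q/h) * h = h * (q/h) := Nat.mul_comm _ _
      have hia : a ≤ (q/h) * a := Nat.le_mul_of_pos_left a hi1
      have hr : n*d₂ + q % h < d₁ := by omega
      have key := hv ⟨q/h, hiq⟩ ⟨n*d₂ + q % h, hr⟩
      rw [Finset.sum_eq_single (⟨b + q, by omega⟩ : Fin d₀)] at key
      · have hone : Cent n d₂ b a h (q/h) (n*d₂+q%h) (b+q) = 1 := by
          unfold Cent
          rw [if_neg (by omega), if_pos (by omega), if_neg (by omega), if_pos (by omega)]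
          ring
        rw [hone] at key; simpa using key
      · intro s _ hs
        have hzero : Cent n d₂ b a h (q/h) (n*d₂+q%h) (s:ℕ) = 0 := by
          unfold Cent
          rw [if_neg (by omega)]
          by_cases hsb : b ≤ (s:ℕ)
          · rw [if_pos hsb, if_neg (by omega), if_neg]
            · ring
            · rintro ⟨hcon, -⟩
              exact hs (Fin.ext (show (s:ℕ) = b + q by omega))
          · rw [if_neg hsb]
        rw [hzero]; simp
      · intro hmem; exact absurd (Finset.mem_univ _) hmem
  -- Part 2: coordinates in [0, b) vanish
  have hU : ∀ p, ∀ hp : p < b, v ⟨p, by omega⟩ = 0 := by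
    intro p hp
    have hd2 : 0 < d₂ := by
      rcases Nat.eq_zero_or_pos d₂ with rfl | hpos
      · simp at hb2; omega
      · exact hpos
    have hn2 : 2 ≤ n := hd2n (by omega)
    set t := p % d₂ with ht
    have htlt : t < d₂ := Nat.mod_lt _ hd2
    set vex : ℕ → k := fun s => if hs : s < d₀ then v ⟨s, hs⟩ else 0 with hvex
    have hvexs : ∀ s : Fin d₀, vex (s:ℕ) = v s := by
      intro s
      simp only [hvex]
      rw [dif_pos s.2]
    set U : ℕ → k := fun m => if t + d₂*m < b then vex (t + d₂*m) else 0 with hUdef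
    have hkey : ∀ m, m < n^2-1 → U m = 0 := by
      apply fmat_elim hn2
      intro i j hi hj
      have hrow : j*d₂ + t < n*d₂ := by
        calc j*d₂ + t < j*d₂ + d₂ := by omega
        _ = (j+1)*d₂ := by ring
        _ ≤ n*d₂ := Nat.mul_le_mul_right _ (by omega)
      have key := hv ⟨i, hi⟩ ⟨j*d₂+t, by omega⟩
      have hjd : (j*d₂+t)/d₂ = j := by
        rw [Nat.add_comm, Nat.add_mul_div_right _ _ hd2, Nat.div_eq_of_lt htlt, Nat.zero_add]
      have hjm : (j*d₂+t) % d₂ = t := by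
        rw [Nat.add_comm, Nat.add_mul_mod_self_right, Nat.mod_eq_of_lt htlt]
      -- transform the sum
      have htrans : ∑ s : Fin d₀, ((Cent n d₂ b a h i (j*d₂+t) (s:ℕ) : ℤ) : k) * v s
          = ∑ m ∈ Finset.range (n^2-1), ((fmat n m i j : ℤ) : k) * U m := by
        have hL : ∀ s : Fin d₀,
            ((Cent n d₂ b a h i (j*d₂+t) (s:ℕ) : ℤ) : k) * v s
            = if (s:ℕ) < b ∧ (s:ℕ) % d₂ = t then
                ((fmat n ((s:ℕ)/d₂) i j : ℤ) : k) * vex (s:ℕ) else 0 := by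
          intro s
          unfold Cent
          rw [if_pos hrow, hjd, hjm]
          by_cases hc : (s:ℕ) < b ∧ t = (s:ℕ) % d₂
          · rw [if_pos hc, if_pos ⟨hc.1, hc.2.symm⟩, hvexs s]
          · rw [if_neg hc, if_neg (by tauto)]
            simp
        rw [Finset.sum_congr rfl (fun s _ => hL s)]
        rw [Fin.sum_univ_eq_sum_range
          (fun s => if s < b ∧ s % d₂ = t then ((fmat n (s/d₂) i j : ℤ) : k) * vex s else 0)]
        rw [← Finset.sum_filter]
        have hR : ∀ m ∈ Finset.range (n^2-1), ((fmat n m i j : ℤ) : k) * U m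
            = if t + d₂*m < b then ((fmat n m i j : ℤ) : k) * vex (t + d₂*m) else 0 := by
          intro m _
          simp only [hUdef]
          split
          · rfl
          · exact mul_zero _
        rw [Finset.sum_congr rfl hR, ← Finset.sum_filter]
        · refine Finset.sum_nbij' (fun s => s / d₂) (fun m => t + d₂*m) ?_ ?_ ?_ ?_ ?_
          · intro s hs
            simp only [Finset.mem_filter, Finset.mem_range] at hs ⊢
            refine ⟨?_, ?_⟩
            · rw [Nat.div_lt_iff_lt_mul hd2]
              exact lt_of_lt_of_le hs.2.1 hb2
            · rw [← hs.2.2, Nat.mod_add_div]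
              exact hs.2.1
          · intro m hm
            simp only [Finset.mem_filter, Finset.mem_range] at hm ⊢
            refine ⟨by omega, hm.2, ?_⟩
            rw [Nat.add_mul_mod_self_left, Nat.mod_eq_of_lt htlt]
          · intro s hs
            simp only [Finset.mem_filter, Finset.mem_range] at hs
            show t + d₂ * (s / d₂) = s
            rw [← hs.2.2, Nat.mod_add_div]
          · intro m hm
            show (t + d₂ * m) / d₂ = m
            rw [Nat.add_mul_div_left _ _ hd2, Nat.div_eq_of_lt htlt, Nat.zero_add]
          · intro s hs
            simp only [Finset.mem_filter, Finset.mem_range] at hs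
            have heq : t + d₂ * (s / d₂) = s := by rw [← hs.2.2, Nat.mod_add_div]
            show ((fmat n (s/d₂) i j : ℤ) : k) * vex s
                = ((fmat n (s/d₂) i j : ℤ) : k) * vex (t + d₂*(s/d₂))
            rw [heq]
      rw [← htrans]
      exact key
    have hplt : p / d₂ < n^2 - 1 := by
      rw [Nat.div_lt_iff_lt_mul hd2]
      exact lt_of_lt_of_le hp hb2
    have hpe : t + d₂*(p/d₂) = p := by rw [ht, Nat.mod_add_div]
    have := hkey (p/d₂) hplt
    simp only [hUdef] at this
    rw [hpe, if_pos hp] at this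
    simp only [hvex] at this
    rw [dif_pos (show p < d₀ by omega)] at this
    exact this
  funext s
  rcases Nat.lt_or_ge (s:ℕ) b with hs | hs
  · have := hU s hs
    have he : s = (⟨(s:ℕ), by omega⟩ : Fin d₀) := Fin.ext rfl
    rw [he]; exact this
  · have hq : (s:ℕ) - b < a := by omega
    have := hW ((s:ℕ) - b) hq
    have he : s = (⟨b + ((s:ℕ) - b), by omega⟩ : Fin d₀) :=
      Fin.ext (show (s:ℕ) = b + ((s:ℕ) - b) by omega)
    rw [he]; exact this

end Cinj

section Surj
variable {k : Type*} [Field k]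

lemma sup_range_top {n N d : ℕ} (M : Fin n → Matrix (Fin N) (Fin d) k)
    (hcol : ∀ ρ : Fin N, ∃ (i : Fin n) (s : Fin d),
      ∀ r : Fin N, M i r s = if r = ρ then 1 else 0) :
    ⨆ i, LinearMap.range (Matrix.mulVecLin (M i)) = ⊤ := by
  rw [eq_top_iff]
  intro v _
  rw [pi_eq_sum_univ v]
  refine Submodule.sum_mem _ (fun ρ _ => Submodule.smul_mem _ _ ?_)
  obtain ⟨i, s, hs⟩ := hcol ρ
  have hv : (fun j => if ρ = j then (1:k) else 0) = (M i).mulVecLin (Pi.single s 1) := by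
    funext r
    rw [Matrix.mulVecLin_apply, Matrix.mulVec_single]
    show (if ρ = r then (1:k) else 0) = M i r s * 1
    rw [mul_one, hs r]
    simp [eq_comm]
  rw [hv]
  exact le_iSup (fun i => LinearMap.range (Matrix.mulVecLin (M i))) i
    ⟨Pi.single s 1, rfl⟩

lemma C_col {n d₀ d₁ d₂ b a h : ℕ} (hn : 1 ≤ n)
    (hb1 : d₂ ≤ b) (hb2 : b ≤ (n^2-1)*d₂) (hba : b + a = d₀)
    (hah : a ≤ n*h) (hha : h ≤ n*a) (hd2n : d₂ ≠ 0 → 2 ≤ n) (hnd2 : n*d₂ + h = d₁)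
    (ρ : Fin d₁) :
    ∃ (i : Fin n) (s : Fin d₀), ∀ r : Fin d₁,
      Cent n d₂ b a h (i:ℕ) (r:ℕ) (s:ℕ) = if r = ρ then 1 else 0 := by
  have hbd : b ≤ d₀ := by omega
  by_cases hρ : (ρ:ℕ) < n*d₂
  · -- a column of the `fmat 0` block
    have hd2 : 0 < d₂ := by
      rcases Nat.eq_zero_or_pos d₂ with rfl | hx
      · omega
      · exact hx
    have hn2 : 2 ≤ n := hd2n (by omega)
    set j := (ρ:ℕ) / d₂ with hj
    set t := (ρ:ℕ) % d₂ with htd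
    have htlt : t < d₂ := Nat.mod_lt _ hd2
    have hjlt : j < n := by
      rw [hj, Nat.div_lt_iff_lt_mul hd2]
      exact hρ
    obtain ⟨i, hi, hcol⟩ := fmat_zero_col hn2 hjlt
    refine ⟨⟨i, hi⟩, ⟨t, lt_of_lt_of_le htlt (le_trans hb1 hbd)⟩, ?_⟩
    intro r
    show Cent n d₂ b a h i (r:ℕ) t = if r = ρ then 1 else 0
    unfold Cent
    by_cases hr : (r:ℕ) < n*d₂
    · rw [if_pos hr]
      have hrj : (r:ℕ)/d₂ < n := by
        rw [Nat.div_lt_iff_lt_mul hd2]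
        exact hr
      have htm : t % d₂ = t := Nat.mod_eq_of_lt htlt
      by_cases hc : (r:ℕ) % d₂ = t
      · rw [if_pos ⟨by omega, by omega⟩]
        have ht0 : t / d₂ = 0 := Nat.div_eq_of_lt htlt
        rw [ht0, hcol _ hrj]
        have hdmr := Nat.div_add_mod (r:ℕ) d₂
        have hdmρ := Nat.div_add_mod (ρ:ℕ) d₂
        rw [← hj, ← htd] at hdmρ
        by_cases he : (r:ℕ)/d₂ = j
        · rw [he] at hdmr
          rw [if_pos he, if_pos (Fin.ext (show (r:ℕ) = (ρ:ℕ) by omega))]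
        · rw [if_neg he, if_neg]
          intro hcon
          exact he (by rw [hcon, hj])
      · rw [if_neg (by rw [htm]; tauto), if_neg]
        intro hcon
        rw [hcon] at hc
        exact hc htd.symm
    · rw [if_neg hr, if_neg (by omega : ¬ b ≤ t), if_neg]
      intro hcon
      rw [hcon] at hr
      exact hr hρ
  · -- a column of the second block
    push_neg at hρ
    have hρd : (ρ:ℕ) < d₁ := ρ.isLt
    have hh0 : 0 < h := by omega
    set q := (ρ:ℕ) - n*d₂ with hqd
    have hq : q < h := by omega
    have ha0 : 0 < a := by
      rcases Nat.eq_zero_or_pos a with rfl | ha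
      · simp at hha; omega
      · exact ha
    have hia : q/a < n := by
      rw [Nat.div_lt_iff_lt_mul ha0]
      omega
    have hma : q % a < a := Nat.mod_lt _ ha0
    have hdm : a * (q/a) + q % a = q := Nat.div_add_mod q a
    have hcomm : (q/a) * a = a * (q/a) := Nat.mul_comm _ _
    refine ⟨⟨q/a, hia⟩, ⟨b + q % a, by omega⟩, ?_⟩
    intro r
    show Cent n d₂ b a h (q/a) (r:ℕ) (b + q % a) = if r = ρ then 1 else 0
    unfold Cent
    by_cases hr : (r:ℕ) < n*d₂
    · rw [if_pos hr, if_neg (by rintro ⟨h1, -⟩; omega), if_neg]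
      intro hcon
      rw [hcon] at hr
      omega
    · rw [if_neg hr, if_pos (by omega : b ≤ b + q % a)]
      have hsecond : ¬ (b + q % a - b = (q/a) * h + ((r:ℕ) - n*d₂) ∧ 1 ≤ q/a) := by
        rintro ⟨hcon, hge⟩
        have : h ≤ (q/a) * h := Nat.le_mul_of_pos_left h hge
        omega
      rw [if_neg hsecond]
      by_cases he : (r:ℕ) - n*d₂ = (q/a) * a + (b + q % a - b)
      · rw [if_pos he, if_pos (Fin.ext (show (r:ℕ) = (ρ:ℕ) by push_neg at hr; omega))]
        ring
      · rw [if_neg he, if_neg]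
        · ring
        · intro hcon
          apply he
          rw [hcon]
          push_neg at hr
          omega
end Surj

section SumAC
variable {k : Type*} [Field k]

lemma sum_AC_zero {n d₀ d₁ d₂ b a h : ℕ} (hn : 1 ≤ n) (hb2 : b ≤ (n^2-1)*d₂)
    (hd2n : d₂ ≠ 0 → 2 ≤ n) (hnd2 : n*d₂ + h = d₁) :
    (∑ i : Fin n,
      (Matrix.of fun (t : Fin d₂) (r : Fin d₁) =>
        if (r:ℕ) = (i:ℕ)*d₂ + (t:ℕ) then (1:k) else 0) *
      (Matrix.of fun (r : Fin d₁) (s : Fin d₀) =>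
        ((Cent n d₂ b a h (i:ℕ) (r:ℕ) (s:ℕ) : ℤ) : k))) = 0 := by
  ext t s
  rw [Matrix.sum_apply, Matrix.zero_apply]
  have hd2 : 0 < d₂ := t.pos
  have hn2 : 2 ≤ n := hd2n (by omega)
  have hrow : ∀ i : Fin n, (i:ℕ)*d₂ + (t:ℕ) < n*d₂ := by
    intro i
    calc (i:ℕ)*d₂ + (t:ℕ) < (i:ℕ)*d₂ + d₂ := by omega
    _ = ((i:ℕ)+1)*d₂ := by ring
    _ ≤ n*d₂ := Nat.mul_le_mul_right _ (by omega)
  have hterm : ∀ i : Fin n,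
      ((Matrix.of fun (t : Fin d₂) (r : Fin d₁) =>
        if (r:ℕ) = (i:ℕ)*d₂ + (t:ℕ) then (1:k) else 0) *
      (Matrix.of fun (r : Fin d₁) (s : Fin d₀) =>
        ((Cent n d₂ b a h (i:ℕ) (r:ℕ) (s:ℕ) : ℤ) : k))) t s
      = ((Cent n d₂ b a h (i:ℕ) ((i:ℕ)*d₂ + (t:ℕ)) (s:ℕ) : ℤ) : k) := by
    intro i
    rw [Matrix.mul_apply]
    rw [Finset.sum_eq_single (⟨(i:ℕ)*d₂ + (t:ℕ), by have := hrow i; omega⟩ : Fin d₁)]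
    · simp
    · intro r _ hr
      simp only [Matrix.of_apply]
      rw [if_neg, zero_mul]
      intro hcon
      exact hr (Fin.ext hcon)
    · intro hmem; exact absurd (Finset.mem_univ _) hmem
  rw [Finset.sum_congr rfl (fun i _ => hterm i)]
  have hdiv : ∀ i : Fin n, ((i:ℕ)*d₂ + (t:ℕ)) / d₂ = (i:ℕ) := by
    intro i
    rw [Nat.add_comm, Nat.add_mul_div_right _ _ hd2, Nat.div_eq_of_lt t.isLt, Nat.zero_add]
  have hmod : ∀ i : Fin n, ((i:ℕ)*d₂ + (t:ℕ)) % d₂ = (t:ℕ) := by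
    intro i
    rw [Nat.add_comm, Nat.add_mul_mod_self_right, Nat.mod_eq_of_lt t.isLt]
  by_cases hc : (s:ℕ) < b ∧ (t:ℕ) = (s:ℕ) % d₂
  · have hCe : ∀ i : Fin n,
        Cent n d₂ b a h (i:ℕ) ((i:ℕ)*d₂ + (t:ℕ)) (s:ℕ) = fmat n ((s:ℕ)/d₂) (i:ℕ) (i:ℕ) := by
      intro i
      unfold Cent
      rw [if_pos (hrow i), hdiv i, hmod i, if_pos ⟨hc.1, hc.2⟩]
    have hsum : ∑ i : Fin n, ((Cent n d₂ b a h (i:ℕ) ((i:ℕ)*d₂ + (t:ℕ)) (s:ℕ) : ℤ) : k)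
        = ∑ i : Fin n, ((fmat n ((s:ℕ)/d₂) (i:ℕ) (i:ℕ) : ℤ) : k) :=
      Finset.sum_congr rfl (fun i _ => by rw [hCe i])
    have hmlt : (s:ℕ)/d₂ < n^2 - 1 := by
      rw [Nat.div_lt_iff_lt_mul hd2]
      exact lt_of_lt_of_le hc.1 hb2
    rw [hsum, Fin.sum_univ_eq_sum_range (fun m => ((fmat n ((s:ℕ)/d₂) m m : ℤ) : k)),
        ← Int.cast_sum, fmat_trace hn2 hmlt, Int.cast_zero]
  · apply Finset.sum_eq_zero
    intro i _
    have : Cent n d₂ b a h (i:ℕ) ((i:ℕ)*d₂ + (t:ℕ)) (s:ℕ) = 0 := by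
      unfold Cent
      rw [if_pos (hrow i), hdiv i, hmod i, if_neg (by tauto)]
    rw [this, Int.cast_zero]
end SumAC
open Matrix LinearMap Module

section lower
variable {k : Type*} [Field k] {n d₀ d₁ d₂ : ℕ}

lemma blockM_mulVec (A : Fin n → Matrix (Fin d₂) (Fin d₁) k)
    (B : Fin n → Matrix (Fin d₂) (Fin d₀) k)
    (C : Fin n → Matrix (Fin d₁) (Fin d₀) k) (i : Fin n)
    (x : Fin d₂ → k) (y : Fin d₁ → k) (z : Fin d₀ → k) :
    blockM A B C i *ᵥ Sum.elim x (Sum.elim y z) =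
      Sum.elim (A i *ᵥ y + B i *ᵥ z) (Sum.elim (C i *ᵥ z) 0) := by
  unfold blockM
  simp [fromBlocks_mulVec, fromCols_mulVec_sumElim]

lemma lower_bound (A : Fin n → Matrix (Fin d₂) (Fin d₁) k)
    (B : Fin n → Matrix (Fin d₂) (Fin d₀) k)
    (C : Fin n → Matrix (Fin d₁) (Fin d₀) k) :
    d₂ + (d₁ - n * d₂) ≤
      Module.finrank k
        ↥(⨅ i, LinearMap.ker (Matrix.mulVecLin (blockM A B C i))) := by
  classical
  set K : Submodule k (Fin d₁ → k) := ⨅ i, LinearMap.ker (Matrix.mulVecLin (A i)) with hK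
  set S : Submodule k (Fin d₂ ⊕ (Fin d₁ ⊕ Fin d₀) → k) :=
    ⨅ i, LinearMap.ker (Matrix.mulVecLin (blockM A B C i)) with hS
  -- the embedding
  have hmem : ∀ (w : Fin d₂ → k) (v : K),
      Sum.elim w (Sum.elim (v : Fin d₁ → k) 0) ∈ S := by
    intro w v
    rw [hS, Submodule.mem_iInf]
    intro i
    rw [LinearMap.mem_ker, Matrix.mulVecLin_apply, blockM_mulVec]
    have hv : A i *ᵥ (v : Fin d₁ → k) = 0 := by
      have := v.2
      simp only [hK, Submodule.mem_iInf] at this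
      simpa [Matrix.mulVecLin_apply] using this i
    simp [hv]
  let Θ : ((Fin d₂ → k) × K) →ₗ[k] (Fin d₂ ⊕ (Fin d₁ ⊕ Fin d₀) → k) :=
    { toFun := fun p => Sum.elim p.1 (Sum.elim (p.2 : Fin d₁ → k) 0)
      map_add' := by
        intro p q; funext x
        rcases x with t | (r | s) <;> simp
      map_smul' := by
        intro c p; funext x
        rcases x with t | (r | s) <;> simp }
  let Θ' : ((Fin d₂ → k) × K) →ₗ[k] S := Θ.codRestrict S (fun p => hmem p.1 p.2)
  have hinj : Function.Injective Θ' := by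
    intro p q hpq
    have h1 : Θ p = Θ q := congrArg Subtype.val hpq
    have h2 : ∀ x, Θ p x = Θ q x := fun x => congrFun h1 x
    ext t
    · exact h2 (Sum.inl t)
    · exact h2 (Sum.inr (Sum.inl _))
  have hfin : d₂ + finrank k K ≤ finrank k S := by
    have := LinearMap.finrank_le_finrank_of_injective hinj
    rwa [Module.finrank_prod, Module.finrank_pi, Fintype.card_fin] at this
  have hKrank : d₁ ≤ finrank k K + n * d₂ := by
    have hker : K = LinearMap.ker (LinearMap.pi fun i => (A i).mulVecLin) := by
      rw [LinearMap.ker_pi, hK]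
    have hrn := LinearMap.finrank_range_add_finrank_ker
      (LinearMap.pi fun i => (A i).mulVecLin)
    rw [Module.finrank_pi, Fintype.card_fin] at hrn
    have hrle : finrank k (LinearMap.range (LinearMap.pi fun i => (A i).mulVecLin)) ≤ n * d₂ := by
      have := Submodule.finrank_le (R := k)
        (LinearMap.range (LinearMap.pi fun i => (A i).mulVecLin))
      rwa [Module.finrank_pi_fintype, Finset.sum_congr rfl
          (fun i _ => by rw [Module.finrank_pi, Fintype.card_fin]),
        Finset.sum_const, Finset.card_univ, Fintype.card_fin, smul_eq_mul] at this
    rw [hker]; omega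
  omega

end lower

section Socle
variable {k : Type*} [Field k]

lemma socle_finrank {n d₀ d₁ d₂ b a h : ℕ} (hn : 1 ≤ n)
    (hb1 : d₂ ≤ b) (hb2 : b ≤ (n^2-1)*d₂) (hba : b + a = d₀)
    (hah : a ≤ n*h) (hha : h ≤ n*a) (hd2n : d₂ ≠ 0 → 2 ≤ n) (hnd2 : n*d₂ + h = d₁) :
    Module.finrank k
      ↥(⨅ i, LinearMap.ker (Matrix.mulVecLin (blockM
        (fun i : Fin n => Matrix.of fun (t : Fin d₂) (r : Fin d₁) =>
          if (r:ℕ) = (i:ℕ)*d₂ + (t:ℕ) then (1:k) else 0)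
        (fun _ => (0 : Matrix (Fin d₂) (Fin d₀) k))
        (fun i : Fin n => Matrix.of fun (r : Fin d₁) (s : Fin d₀) =>
          ((Cent n d₂ b a h (i:ℕ) (r:ℕ) (s:ℕ) : ℤ) : k)) i))) = d₂ + h := by
  classical
  set A : Fin n → Matrix (Fin d₂) (Fin d₁) k := fun i =>
    Matrix.of fun (t : Fin d₂) (r : Fin d₁) =>
      if (r:ℕ) = (i:ℕ)*d₂ + (t:ℕ) then (1:k) else 0 with hA
  set C : Fin n → Matrix (Fin d₁) (Fin d₀) k := fun i =>
    Matrix.of fun (r : Fin d₁) (s : Fin d₀) =>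
      ((Cent n d₂ b a h (i:ℕ) (r:ℕ) (s:ℕ) : ℤ) : k) with hC
  set T : Submodule k (Fin d₂ ⊕ (Fin d₁ ⊕ Fin d₀) → k) :=
    ⨅ i, LinearMap.ker (Matrix.mulVecLin (blockM A (fun _ => 0) C i)) with hT
  have hrowlt : ∀ (i : Fin n) (t : Fin d₂), (i:ℕ)*d₂ + (t:ℕ) < n*d₂ := by
    intro i t
    calc (i:ℕ)*d₂ + (t:ℕ) < (i:ℕ)*d₂ + d₂ := by have := t.isLt; omega
    _ = ((i:ℕ)+1)*d₂ := by ring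
    _ ≤ n*d₂ := Nat.mul_le_mul_right _ (by have := i.isLt; omega)
  have hd1 : n*d₂ ≤ d₁ := by omega
  let mid : (Fin h → k) → (Fin d₁ → k) := fun u r =>
    if hc : n*d₂ ≤ (r:ℕ) then u ⟨(r:ℕ) - n*d₂, by have := r.isLt; omega⟩ else 0
  let Θ : ((Fin d₂ → k) × (Fin h → k)) →ₗ[k] (Fin d₂ ⊕ (Fin d₁ ⊕ Fin d₀) → k) :=
  { toFun := fun p => Sum.elim p.1 (Sum.elim (mid p.2) 0)
    map_add' := by
      intro p q
      funext z
      rcases z with t | (r | s)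
      · simp
      · show mid (p.2 + q.2) r = mid p.2 r + mid q.2 r
        unfold mid
        split <;> simp
      · simp
    map_smul' := by
      intro c p
      funext z
      rcases z with t | (r | s)
      · simp
      · show mid (c • p.2) r = c * mid p.2 r
        unfold mid
        split <;> simp
      · simp }
  have hAmulVec : ∀ (i : Fin n) (y : Fin d₁ → k) (t : Fin d₂),
      (A i *ᵥ y) t = y ⟨(i:ℕ)*d₂ + (t:ℕ), by have := hrowlt i t; omega⟩ := by
    intro i y t
    show ∑ r, A i t r * y r = _
    rw [Finset.sum_eq_single (⟨(i:ℕ)*d₂ + (t:ℕ), by have := hrowlt i t; omega⟩ : Fin d₁)]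
    · rw [hA]; simp
    · intro r _ hr
      rw [hA]
      simp only [Matrix.of_apply]
      rw [if_neg (fun hcon => hr (Fin.ext hcon)), zero_mul]
    · intro hmem; exact absurd (Finset.mem_univ _) hmem
  have hΘT : ∀ p, Θ p ∈ T := by
    intro p
    rw [hT, Submodule.mem_iInf]
    intro i
    rw [LinearMap.mem_ker, Matrix.mulVecLin_apply]
    show blockM A (fun _ => 0) C i *ᵥ Sum.elim p.1 (Sum.elim (mid p.2) 0) = 0
    rw [blockM_mulVec]
    have h1 : A i *ᵥ mid p.2 = 0 := by
      funext t
      rw [hAmulVec i (mid p.2) t]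
      show dite _ _ _ = 0
      rw [dif_neg (show ¬ n*d₂ ≤ (i:ℕ)*d₂ + (t:ℕ) from by have := hrowlt i t; omega)]
    rw [h1]
    simp
  have hinj : Function.Injective Θ := by
    intro p q hpq
    have h2 : ∀ z, Θ p z = Θ q z := fun z => congrFun (by exact hpq) z
    ext t
    · exact h2 (Sum.inl t)
    · have := h2 (Sum.inr (Sum.inl ⟨n*d₂ + (t:ℕ), by have := t.isLt; omega⟩))
      show p.2 t = q.2 t
      have hmidp : ∀ u : Fin h → k,
          mid u ⟨n*d₂ + (t:ℕ), by have := t.isLt; omega⟩ = u t := by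
        intro u
        show dite _ _ _ = u t
        rw [dif_pos (show n*d₂ ≤ n*d₂ + (t:ℕ) from by omega)]
        congr 1
        apply Fin.ext
        show n*d₂ + (t:ℕ) - n*d₂ = (t:ℕ)
        omega
      rwa [show Θ p (Sum.inr (Sum.inl ⟨n*d₂ + (t:ℕ), by have := t.isLt; omega⟩))
            = mid p.2 ⟨n*d₂ + (t:ℕ), by have := t.isLt; omega⟩ from rfl,
          show Θ q (Sum.inr (Sum.inl ⟨n*d₂ + (t:ℕ), by have := t.isLt; omega⟩))
            = mid q.2 ⟨n*d₂ + (t:ℕ), by have := t.isLt; omega⟩ from rfl,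
          hmidp p.2, hmidp q.2] at this
  have hrange : LinearMap.range Θ = T := by
    apply le_antisymm
    · rintro x ⟨p, rfl⟩
      exact hΘT p
    · intro v hv
      have hv' := (Submodule.mem_iInf _).mp (hT ▸ hv)
      set v1 : Fin d₁ → k := fun r => v (Sum.inr (Sum.inl r)) with hv1d
      set v2 : Fin d₀ → k := fun s => v (Sum.inr (Sum.inr s)) with hv2d
      have hvdec : v = Sum.elim (fun t => v (Sum.inl t)) (Sum.elim v1 v2) := by
        funext z; rcases z with t | (r | s) <;> rfl
      have heq2 : ∀ i : Fin n,
          Sum.elim (A i *ᵥ v1)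
            (Sum.elim (C i *ᵥ v2) (0 : Fin d₀ → k)) = 0 := by
        intro i
        have hvi := hv' i
        rw [LinearMap.mem_ker, Matrix.mulVecLin_apply, hvdec, blockM_mulVec] at hvi
        simpa using hvi
      have hAeq : ∀ (i : Fin n) (t : Fin d₂),
          v1 ⟨(i:ℕ)*d₂ + (t:ℕ), by have := hrowlt i t; omega⟩ = 0 := by
        intro i t
        have := congrFun (heq2 i) (Sum.inl t)
        simp only [Sum.elim_inl, Pi.zero_apply] at this
        rwa [hAmulVec i v1 t] at this
      have hCeq : ∀ (i : Fin n) (r : Fin d₁), (C i *ᵥ v2) r = 0 := by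
        intro i r
        have := congrFun (heq2 i) (Sum.inr (Sum.inl r))
        simpa using this
      have hv2 : v2 = 0 := by
        apply C_inj hn hb1 hb2 hba hah hd2n hnd2 v2
        intro i r
        have := hCeq i r
        rwa [show (C i *ᵥ v2) r
          = ∑ s : Fin d₀, ((Cent n d₂ b a h (i:ℕ) (r:ℕ) (s:ℕ) : ℤ) : k) * v2 s
          from rfl] at this
      have hv1z : ∀ r : Fin d₁, (r:ℕ) < n*d₂ → v1 r = 0 := by
        intro r hr
        have hd2 : 0 < d₂ := by
          rcases Nat.eq_zero_or_pos d₂ with rfl | hx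
          · omega
          · exact hx
        have hilt : (r:ℕ)/d₂ < n := by
          rw [Nat.div_lt_iff_lt_mul hd2]
          exact hr
        have hdm := Nat.div_add_mod (r:ℕ) d₂
        have hmlt : (r:ℕ) % d₂ < d₂ := Nat.mod_lt _ hd2
        have hlt2 : (r:ℕ)/d₂ * d₂ + (r:ℕ)%d₂ < d₁ := by
          rw [Nat.mul_comm]; omega
        have hz : v1 ⟨(r:ℕ)/d₂ * d₂ + (r:ℕ)%d₂, hlt2⟩ = 0 :=
          hAeq ⟨(r:ℕ)/d₂, hilt⟩ ⟨(r:ℕ)%d₂, hmlt⟩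
        have hre : r = (⟨(r:ℕ)/d₂ * d₂ + (r:ℕ)%d₂, hlt2⟩ : Fin d₁) :=
          Fin.ext (by show (r:ℕ) = (r:ℕ)/d₂ * d₂ + (r:ℕ)%d₂; rw [Nat.mul_comm]; omega)
        rw [hre]
        exact hz
      refine ⟨(fun t => v (Sum.inl t), fun x => v1 ⟨n*d₂ + (x:ℕ), by have := x.isLt; omega⟩), ?_⟩
      funext z
      rcases z with t | (r | s)
      · rfl
      · show mid (fun x => v1 ⟨n*d₂ + (x:ℕ), by have := x.isLt; omega⟩) r = v1 r
        unfold mid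
        split
        · next hc =>
          show v1 _ = v1 r
          congr 1
          apply Fin.ext
          show n*d₂ + ((r:ℕ) - n*d₂) = (r:ℕ)
          omega
        · next hc =>
          exact (hv1z r (by omega)).symm
      · show (0:k) = v2 s
        rw [hv2]
        rfl
  have hfr := (LinearEquiv.ofInjective Θ hinj).finrank_eq
  rw [← hrange, ← hfr, Module.finrank_prod, Module.finrank_pi, Module.finrank_pi,
    Fintype.card_fin, Fintype.card_fin]
end Socle

/-- Lemma 5.9 of the paper: under the hypotheses (nonempty stratum,
generic `h₁ = d₁ − n·d₂ > 0`, generic `h₀ = 0`), the generic socle dimension,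
i.e. the minimum over all representations `M` with radical layering
`(d₀,d₁,d₂)` of `dim ⨅ᵢ ker Mᵢ`, equals `d₂ + (d₁ − n·d₂)`. -/
theorem stmt12 (k : Type*) [Field k] [IsAlgClosed k] (hk : ringChar k ≠ 2)
    (n : ℕ) (hn : 1 ≤ n) (d₀ d₁ d₂ : ℕ)
    (h1 : d₁ ≤ n * d₀) (h2 : n * d₂ ≤ (n ^ 2 - 1) * d₁)
    (h3 : n * d₂ < d₁) (h4 : d₀ + d₂ ≤ n * d₁) :
    (∀ (A : Fin n → Matrix (Fin d₂) (Fin d₁) k)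
       (B : Fin n → Matrix (Fin d₂) (Fin d₀) k)
       (C : Fin n → Matrix (Fin d₁) (Fin d₀) k), IsStratumDatum k A C →
        d₂ + (d₁ - n * d₂) ≤
          Module.finrank k
            ↥(⨅ i, LinearMap.ker (Matrix.mulVecLin (blockM A B C i)))) ∧
    (∃ (A : Fin n → Matrix (Fin d₂) (Fin d₁) k)
       (B : Fin n → Matrix (Fin d₂) (Fin d₀) k)
       (C : Fin n → Matrix (Fin d₁) (Fin d₀) k), IsStratumDatum k A C ∧
        Module.finrank k
            ↥(⨅ i, LinearMap.ker (Matrix.mulVecLin (blockM A B C i))) =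
          d₂ + (d₁ - n * d₂)) := by
  constructor
  · intro A B C _
    exact lower_bound A B C
  · set h := d₁ - n*d₂ with hh
    set b := max d₂ (d₀ - n*h) with hbdef
    set a := d₀ - b with hadef
    have hd2n : d₂ ≠ 0 → 2 ≤ n := by
      intro hd2
      by_contra hc
      push_neg at hc
      obtain rfl : n = 1 := by omega
      norm_num at h2
      omega
    have hnd2 : n*d₂ + h = d₁ := by omega
    have hd2d0 : d₂ < d₀ := by
      by_contra hc
      push_neg at hc
      have := Nat.mul_le_mul_left n hc
      omega
    have hhle : h ≤ n*h := Nat.le_mul_of_pos_left h (by omega)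
    have hb1 : d₂ ≤ b := le_max_left _ _
    have hbmr : d₀ - n*h ≤ b := le_max_right _ _
    have hbd : b ≤ d₀ := max_le (by omega) (by omega)
    have hba : b + a = d₀ := by omega
    have hah : a ≤ n*h := by omega
    have hha : h ≤ n*a := by
      by_cases hcase : d₀ - n*h ≤ d₂
      · have hbeq : b = d₂ := by rw [hbdef]; exact max_eq_left hcase
        have he : n*(d₀-d₂) + n*d₂ = n*d₀ := by rw [← Nat.mul_add]; congr 1; omega
        have hae : a = d₀ - d₂ := by omega
        rw [hae]
        omega
      · push_neg at hcase
        have hbeq : b = d₀ - n*h := by rw [hbdef]; exact max_eq_right (by omega)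
        have hae : a = n*h := by omega
        rw [hae]
        calc h ≤ n*h := hhle
        _ ≤ n*(n*h) := Nat.le_mul_of_pos_left _ (by omega)
    have hb2 : b ≤ (n^2-1)*d₂ := by
      rcases Nat.eq_zero_or_pos d₂ with hd20 | hd2pos
      · have hz1 : n*d₂ = 0 := by rw [hd20, Nat.mul_zero]
        have hhd1 : h = d₁ := by omega
        have hz2 : n*h = n*d₁ := by rw [hhd1]
        have hz3 : (n^2-1)*d₂ = 0 := by rw [hd20, Nat.mul_zero]
        omega
      · have hn2 := hd2n (by omega)
        have hnn : n^2 = n*n := sq n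
        have h4n : 4 ≤ n*n := Nat.mul_le_mul hn2 hn2
        have he1 : n*h + n*(n*d₂) = n*d₁ := by rw [← Nat.mul_add]; congr 1; omega
        have he2 : (n^2-1)*d₂ + 1*d₂ = ((n^2-1)+1)*d₂ := by rw [← Nat.add_mul]
        have he4 : ((n^2-1)+1)*d₂ = n^2*d₂ := by congr 1; omega
        have he3 : n^2*d₂ = n*(n*d₂) := by rw [hnn, Nat.mul_assoc]
        have hd2le : d₂ ≤ (n^2-1)*d₂ := Nat.le_mul_of_pos_left d₂ (by omega)
        omega
    refine ⟨(fun i => Matrix.of fun (t : Fin d₂) (r : Fin d₁) =>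
              if (r:ℕ) = (i:ℕ)*d₂ + (t:ℕ) then (1:k) else 0),
            (fun _ => 0),
            (fun i => Matrix.of fun (r : Fin d₁) (s : Fin d₀) =>
              ((Cent n d₂ b a h (i:ℕ) (r:ℕ) (s:ℕ) : ℤ) : k)),
            ⟨?_, ?_, ?_⟩, ?_⟩
    · exact sum_AC_zero hn hb2 hd2n hnd2
    · apply sup_range_top
      intro ρ
      obtain ⟨i, s, hCc⟩ := C_col hn hb1 hb2 hba hah hha hd2n hnd2 ρ
      refine ⟨i, s, fun r => ?_⟩
      show ((Cent n d₂ b a h (i:ℕ) (r:ℕ) (s:ℕ) : ℤ) : k) = if r = ρ then 1 else 0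
      rw [hCc r]
      split <;> simp
    · apply sup_range_top
      intro t
      have hd2pos : 0 < d₂ := t.pos
      have hled : d₂ ≤ n*d₂ := Nat.le_mul_of_pos_left d₂ (by omega)
      have htd1 : (t:ℕ) < d₁ := by have := t.isLt; omega
      refine ⟨⟨0, by omega⟩, ⟨(t:ℕ), htd1⟩, ?_⟩
      intro t'
      show (if (t:ℕ) = 0*d₂ + (t':ℕ) then (1:k) else 0) = if t' = t then 1 else 0
      by_cases hc : t' = t
      · subst hc
        rw [if_pos (by omega), if_pos rfl]
      · rw [if_neg, if_neg hc]
        intro hcon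
        exact hc (Fin.ext (by omega))
    · exact socle_finrank hn hb1 hb2 hba hah hha hd2n hnd2
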